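/- The map θ : (Fin 3)³ → ℤ/2ℤ × ℤ defined by θ(a,b,c) = (1,0) if (a,b,c) ∈ {(0,1,0),(0,2,0)}, θ(a,b,c) = (0,1) if (a,b,c) ∈ {(1,0,2),(2,0,1)}, θ(a,b,c) = (0,−1) if (a,b,c) ∈ {(1,0,1),(2,0,2)}, and θ(a,b,c) = (0,0) otherwise, is a symmetric quandle 3-cocycle of (P_3, ρ): it simultaneously satisfies (i) the quandle 3-cocycle condition θ(a,c,d) − θ(a▷b,c,d) − θ(a,b,d) + θ(a▷c,b▷c,d) + θ(a,b,c) − θ(a▷d,b▷d,c▷d) = (0,0) for all a,b,c,d; (ii) θ(a,a,b) = (0,0) and θ(a,b,b) = (0,0) for all a,b; and (iii) θ(a,b,c) + θ(ρ(a),b,c) = (0,0), θ(a,b,c) + θ(a▷b,ρ(b),c) = (0,0), and θ(a,b,c) + θ(a▷c,b▷c,ρ(c)) = (0,0) for all a,b,c, where ρ(0)=0, ρ(1)=2, ρ(2)=1. -/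
import Mathlib


/-- The quandle operation on `Fin 3` for the quandle `P₃`. -/
def P3op (x y : Fin 3) : Fin 3 := ![![0,0,0], ![2,1,1], ![1,2,2]] x y

/-- The involution `ρ` on `Fin 3`: `ρ(0)=0, ρ(1)=2, ρ(2)=1`. -/
def P3rho (x : Fin 3) : Fin 3 := ![0, 2, 1] x

/-- The map `θ : (Fin 3)³ → ℤ/2ℤ × ℤ` from Oshiro's cocycle. -/
def theta (a b c : Fin 3) : ZMod 2 × ℤ :=
  if (a, b, c) = (0, 1, 0) ∨ (a, b, c) = (0, 2, 0) then (1, 0)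
  else if (a, b, c) = (1, 0, 2) ∨ (a, b, c) = (2, 0, 1) then (0, 1)
  else if (a, b, c) = (1, 0, 1) ∨ (a, b, c) = (2, 0, 2) then (0, -1)
  else (0, 0)

theorem theta_is_symmetric_quandle_3cocycle :
    (∀ a b c d : Fin 3,
      theta a c d - theta (P3op a b) c d - theta a b d + theta (P3op a c) (P3op b c) d
        + theta a b c - theta (P3op a d) (P3op b d) (P3op c d) = (0, 0)) ∧
    (∀ a b : Fin 3, theta a a b = (0, 0) ∧ theta a b b = (0, 0)) ∧
    (∀ a b c : Fin 3,
      theta a b c + theta (P3rho a) b c = (0, 0) ∧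
      theta a b c + theta (P3op a b) (P3rho b) c = (0, 0) ∧
      theta a b c + theta (P3op a c) (P3op b c) (P3rho c) = (0, 0)) := by
  refine ⟨?_, ?_, ?_⟩ <;> decide
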